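/- Let X and Y be Polish, c : X × Y → [0,∞) continuous, μ ∈ P(X), ν ∈ P(Y) with T_c(μ,ν) < ∞, let π ∈ C(μ,ν) be an optimal plan, and let X̃ ⊂ X be closed with μ(X̃) > 0. Then every Kantorovich potential f ∈ S_c(μ,ν) admits a Kantorovich potential f̃ ∈ S_{c_X̃}(μ_X̃, ν_X̃) of the X̃-restricted problem that agrees with f on pr_X(supp π) ∩ X̃. -/

import Mathlib

open MeasureTheory Filter Set Topology
open scoped ENNReal NNReal Manifold

noncomputable section

/-- The topological support of a Borel measure: points all of whose open
neighborhoods have positive measure. -/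
def msupport {X : Type*} [TopologicalSpace X] [MeasurableSpace X]
    (μ : Measure X) : Set X :=
  {x | ∀ U : Set X, IsOpen U → x ∈ U → 0 < μ U}

/-- `π` is a coupling (transport plan) between `μ` and `ν`. -/
def IsCoupling {X Y : Type*} [MeasurableSpace X] [MeasurableSpace Y]
    (π : Measure (X × Y)) (μ : Measure X) (ν : Measure Y) : Prop :=
  π.map Prod.fst = μ ∧ π.map Prod.snd = ν

/-- The optimal transport cost `T_c(μ, ν)`. -/
def transportCost {X Y : Type*} [MeasurableSpace X] [MeasurableSpace Y]
    (c : X → Y → ℝ) (μ : Measure X) (ν : Measure Y) : ℝ≥0∞ :=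
  ⨅ (π : Measure (X × Y)) (_ : IsCoupling π μ ν),
    ∫⁻ p, ENNReal.ofReal (c p.1 p.2) ∂π

/-- `π` is an optimal transport plan between `μ` and `ν` for the cost `c`. -/
def IsOptimalPlan {X Y : Type*} [MeasurableSpace X] [MeasurableSpace Y]
    (c : X → Y → ℝ) (μ : Measure X) (ν : Measure Y) (π : Measure (X × Y)) : Prop :=
  IsCoupling π μ ν ∧
    ∫⁻ p, ENNReal.ofReal (c p.1 p.2) ∂π = transportCost c μ ν

/-- The `c`-transform of a function `f : X → ℝ ∪ {-∞}`, namely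
`f^c(y) = inf_x (c(x,y) - f(x))`. -/
def cTransform {X Y : Type*} (c : X → Y → ℝ) (f : X → EReal) : Y → EReal :=
  fun y => ⨅ x, ((c x y : ℝ) : EReal) - f x

/-- The `c`-transform of a function `g : Y → ℝ ∪ {-∞}`, namely
`g^c(x) = inf_y (c(x,y) - g(y))`. -/
def cTransformY {X Y : Type*} (c : X → Y → ℝ) (g : Y → EReal) : X → EReal :=
  fun x => ⨅ y, ((c x y : ℝ) : EReal) - g y

/-- `f : X → ℝ ∪ {-∞}` is `c`-concave on `X`: it is the `c`-transform of some
`g : Y → ℝ ∪ {-∞}` and is not identically `-∞`. -/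
def CConcave {X Y : Type*} (c : X → Y → ℝ) (f : X → EReal) : Prop :=
  (∃ g : Y → EReal, (∀ y, g y ≠ ⊤) ∧ f = cTransformY c g) ∧
    (∀ x, f x ≠ ⊤) ∧ (∃ x, f x ≠ ⊥)

/-- The `c`-subdifferential `∂_c f = {(x,y) | f(x) + f^c(y) = c(x,y)}`. -/
def cSubdiff {X Y : Type*} (c : X → Y → ℝ) (f : X → EReal) : Set (X × Y) :=
  {p | f p.1 + cTransform c f p.2 = ((c p.1 p.2 : ℝ) : EReal)}

/-- `f` is a (generalized) Kantorovich potential for `(c, μ, ν)`: it is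
`c`-concave and satisfies `f ⊕ f^c = c` almost surely with respect to every
optimal transport plan (which, for `T_c(μ,ν) < ∞`, is equivalent to
`∫ (f ⊕ f^c) dπ = T_c(μ,ν)` for every optimal `π`, since `f ⊕ f^c ≤ c`). -/
def IsKantorovichPotential {X Y : Type*} [MeasurableSpace X] [MeasurableSpace Y]
    (c : X → Y → ℝ) (μ : Measure X) (ν : Measure Y) (f : X → EReal) : Prop :=
  CConcave c f ∧
    ∀ π : Measure (X × Y), IsOptimalPlan c μ ν π →
      ∀ᵐ p ∂π, f p.1 + cTransform c f p.2 = ((c p.1 p.2 : ℝ) : EReal)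

/-- The plan `π` induces regularity on `U` with respect to the compact set `K`. -/
def InducesRegularityOn {X Y : Type*} [TopologicalSpace X] [TopologicalSpace Y]
    [MeasurableSpace X] [MeasurableSpace Y]
    (π : Measure (X × Y)) (U : Set X) (K : Set Y) : Prop :=
  IsCompact K ∧
    (Prod.fst '' msupport π) ∩ U = Prod.fst '' (msupport π ∩ (U ×ˢ K))

/-- The plan `π` induces regularity at the point `x ∈ supp μ`: it induces
regularity on some relatively open neighborhood `U ⊆ supp μ` of `x`. -/
def InducesRegularityAt {X Y : Type*} [TopologicalSpace X] [TopologicalSpace Y]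
    [MeasurableSpace X] [MeasurableSpace Y]
    (π : Measure (X × Y)) (μ : Measure X) (x : X) : Prop :=
  ∃ U : Set X, x ∈ U ∧ (∃ V : Set X, IsOpen V ∧ U = V ∩ msupport μ) ∧
    ∃ K : Set Y, InducesRegularityOn π U K

/-- `F` is a decomposition of the set `S` into its connected components. -/
def IsComponentDecomp {X : Type*} [TopologicalSpace X] {ι : Type*}
    (S : Set X) (F : ι → Set X) : Prop :=
  (⋃ i, F i) = S ∧ Pairwise (fun i j => Disjoint (F i) (F j)) ∧
    ∀ i, ∃ x ∈ S, F i = connectedComponentIn S x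

/-- A transport plan `π` is degenerate (with respect to decompositions `F`, `G`
of the supports of `μ` and `ν` into connected components). -/
def IsDegenerate {X Y : Type*} [MeasurableSpace X] [MeasurableSpace Y] {ι κ : Type*}
    (F : ι → Set X) (G : κ → Set Y) (μ : Measure X) (ν : Measure Y)
    (π : Measure (X × Y)) : Prop :=
  ∃ (I' : Set ι) (J' : Set κ),
    0 < (∑' i : I', μ (F i.1)) ∧
    (∑' i : I', μ (F i.1)) = (∑' i : I', ∑' j : J', π (F i.1 ×ˢ G j.1)) ∧
    (∑' i : I', ∑' j : J', π (F i.1 ×ˢ G j.1)) = (∑' j : J', ν (G j.1)) ∧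
    (∑' j : J', ν (G j.1)) < 1

end

/-- Restriction of Kantorovich potentials to a closed set of
partial mass: `μ_X̃ = μ|_X̃ / μ(X̃)`, `ν_X̃ = π(X̃ × ·)/μ(X̃)`, `c_X̃ = c|_{X̃ × Y}`. -/
theorem stmt4 {X Y : Type*}
    [TopologicalSpace X] [PolishSpace X] [MeasurableSpace X] [BorelSpace X]
    [TopologicalSpace Y] [PolishSpace Y] [MeasurableSpace Y] [BorelSpace Y]
    (c : X → Y → ℝ) (hc0 : ∀ x y, 0 ≤ c x y)
    (hccont : Continuous fun p : X × Y => c p.1 p.2)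
    (μ : Measure X) (ν : Measure Y) [IsProbabilityMeasure μ] [IsProbabilityMeasure ν]
    (hT : transportCost c μ ν < ⊤)
    (π : Measure (X × Y)) (hπ : IsOptimalPlan c μ ν π)
    (Xt : Set X) (hXtc : IsClosed Xt) (hXt : 0 < μ Xt)
    (f : X → EReal) (hf : IsKantorovichPotential c μ ν f) :
    ∃ ft : ↥Xt → EReal,
      IsKantorovichPotential (fun (x : ↥Xt) (y : Y) => c x.1 y)
        ((μ Xt)⁻¹ • Measure.comap Subtype.val μ)
        ((μ Xt)⁻¹ • Measure.map Prod.snd (π.restrict (Xt ×ˢ Set.univ))) ft ∧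
      ∀ p : X × Y, p ∈ msupport π → ∀ hx : p.1 ∈ Xt, ft ⟨p.1, hx⟩ = f p.1 := by
  classical
  obtain ⟨⟨⟨g, hg_top, hfg⟩, hf_top, x0, hx0⟩, hfae⟩ := hf
  obtain ⟨⟨hπ1, hπ2⟩, hπcost⟩ := hπ
  have hXtm : MeasurableSet Xt := hXtc.measurableSet
  set m : ℝ≥0∞ := μ Xt with hm
  have hm0 : m ≠ 0 := hXt.ne'
  have hmtop : m ≠ ⊤ := measure_ne_top μ Xt
  set S : Set (X × Y) := Xt ×ˢ Set.univ with hS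
  have hSpre : S = Prod.fst ⁻¹' Xt := Set.prod_univ
  have hSm : MeasurableSet S := hXtm.prod MeasurableSet.univ
  -- the cost and functions
  set ct : ↥Xt → Y → ℝ := fun x y => c x.1 y with hct
  set ft : ↥Xt → EReal := fun x => f x.1 with hft
  set fc : Y → EReal := cTransform c f with hfc
  set ftc : Y → EReal := cTransform ct ft with hftc
  -- f^c is never ⊤
  have hfc_top : ∀ y, fc y ≠ ⊤ := by
    intro y htop
    have h1 : fc y ≤ ((c x0 y : ℝ) : EReal) - f x0 := iInf_le _ x0
    rw [htop, top_le_iff] at h1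
    have ha : ((f x0).toReal : EReal) = f x0 := EReal.coe_toReal (hf_top x0) hx0
    rw [← ha, ← EReal.coe_sub] at h1
    exact EReal.coe_ne_top _ h1
  -- pointwise transfer lemma
  have key : ∀ (x : X) (hx : x ∈ Xt) (y : Y),
      f x + fc y = ((c x y : ℝ) : EReal) → f x + ftc y = ((c x y : ℝ) : EReal) := by
    intro x hx y h
    have hfxb : f x ≠ ⊥ := by
      intro hb
      rw [hb, EReal.bot_add] at h
      exact EReal.bot_ne_coe _ h
    have ha : ((f x).toReal : EReal) = f x := EReal.coe_toReal (hf_top x) hfxb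
    set a : ℝ := (f x).toReal with hadef
    have hfcb : fc y ≠ ⊥ := by
      intro hb
      rw [← ha, hb, EReal.add_bot] at h
      exact EReal.bot_ne_coe _ h
    have hbcoe : ((fc y).toReal : EReal) = fc y := EReal.coe_toReal (hfc_top y) hfcb
    set b : ℝ := (fc y).toReal with hbdef
    have hab : a + b = c x y := by
      rw [← ha, ← hbcoe, ← EReal.coe_add] at h
      exact_mod_cast h
    have hle1 : (b : EReal) ≤ ftc y := by
      rw [hbcoe]
      exact le_iInf fun x' => iInf_le (fun x'' => ((c x'' y : ℝ) : EReal) - f x'') x'.1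
    have hle2 : ftc y ≤ (b : EReal) := by
      have h2 : ftc y ≤ ((c x y : ℝ) : EReal) - f x :=
        iInf_le (fun x' : ↥Xt => ((ct x' y : ℝ) : EReal) - ft x') ⟨x, hx⟩
      rw [← ha, ← EReal.coe_sub] at h2
      have : c x y - a = b := by linarith
      rwa [this] at h2
    have hftcy : ftc y = (b : EReal) := le_antisymm hle2 hle1
    rw [hftcy, ← ha, ← EReal.coe_add, hab]
  -- measurable embeddings
  have hval : MeasurableEmbedding (Subtype.val : ↥Xt → X) :=
    MeasurableEmbedding.subtype_coe hXtm
  set e : ↥Xt × Y → X × Y := fun q => (q.1.1, q.2) with he_def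
  have he : MeasurableEmbedding e := hval.prodMap MeasurableEmbedding.id
  have hrange : Set.range e = S := by
    ext p
    constructor
    · rintro ⟨q, rfl⟩
      exact ⟨q.1.2, Set.mem_univ _⟩
    · rintro ⟨hp1, -⟩
      exact ⟨(⟨p.1, hp1⟩, p.2), rfl⟩
  -- measures
  set ρ : Measure (X × Y) := π.restrict S with hρ
  set κ : Measure (↥Xt × Y) := Measure.comap e ρ with hκ
  have hmapκ : Measure.map e κ = ρ := by
    rw [hκ, he.map_comap, hrange, hρ, Measure.restrict_restrict hSm, Set.inter_self]
  set μt : Measure ↥Xt := m⁻¹ • Measure.comap Subtype.val μ with hμt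
  set νt : Measure Y := m⁻¹ • Measure.map Prod.snd ρ with hνt
  -- marginals of ρ
  have hfstρ : Measure.map Prod.fst ρ = μ.restrict Xt := by
    rw [hρ, show S = Prod.fst ⁻¹' Xt from hSpre,
      ← Measure.restrict_map measurable_fst hXtm, hπ1]
  -- marginals of κ
  have hfstκ : Measure.map Prod.fst κ = Measure.comap Subtype.val μ := by
    have h1 : Measure.map Subtype.val (Measure.map Prod.fst κ) = μ.restrict Xt := by
      rw [Measure.map_map measurable_subtype_coe measurable_fst]
      have : (Subtype.val ∘ Prod.fst : ↥Xt × Y → X) = Prod.fst ∘ e := rfl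
      rw [this, ← Measure.map_map measurable_fst he.measurable, hmapκ, hfstρ]
    have h2 : Measure.comap (Subtype.val : ↥Xt → X) (μ.restrict Xt)
        = Measure.comap (Subtype.val : ↥Xt → X) μ := by
      ext s hs
      rw [hval.comap_apply, hval.comap_apply,
        Measure.restrict_apply' hXtm,
        Set.inter_eq_self_of_subset_left (Subtype.coe_image_subset Xt s)]
    rw [← h2, ← h1, hval.comap_map]
  have hsndκ : Measure.map Prod.snd κ = Measure.map Prod.snd ρ := by
    conv_rhs => rw [← hmapκ]
    rw [Measure.map_map measurable_snd he.measurable]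
    rfl
  set πt : Measure (↥Xt × Y) := m⁻¹ • κ with hπt
  have hπtc : IsCoupling πt μt νt := by
    constructor
    · rw [hπt, Measure.map_smul, hfstκ, hμt]
    · rw [hπt, Measure.map_smul, hsndκ, hνt]
  -- costs
  have hcm : Measurable fun p : X × Y => ENNReal.ofReal (c p.1 p.2) :=
    hccont.measurable.ennreal_ofReal
  have hcmt : Measurable fun q : ↥Xt × Y => ENNReal.ofReal (ct q.1 q.2) :=
    hcm.comp he.measurable
  set A : ℝ≥0∞ := ∫⁻ p, ENNReal.ofReal (c p.1 p.2) ∂ρ with hA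
  set R : ℝ≥0∞ := ∫⁻ p, ENNReal.ofReal (c p.1 p.2) ∂(π.restrict Sᶜ) with hR
  have hsplit : A + R = transportCost c μ ν := by
    rw [← hπcost, hA, hR, ← lintegral_add_measure, hρ,
      Measure.restrict_add_restrict_compl hSm]
  have hAtop : A ≠ ⊤ := by
    intro h
    rw [← hsplit, h] at hT
    simp at hT
  have hκcost : (∫⁻ q, ENNReal.ofReal (ct q.1 q.2) ∂κ) = A := by
    rw [hA, ← hmapκ, lintegral_map hcm he.measurable]
  have hπtcost : (∫⁻ q, ENNReal.ofReal (ct q.1 q.2) ∂πt) = m⁻¹ * A := by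
    rw [hπt, lintegral_smul_measure, hκcost, smul_eq_mul]
  -- main potential property
  refine ⟨ft, ⟨⟨⟨g, hg_top, ?_⟩, fun x => hf_top x.1, ?_⟩, ?_⟩, fun p _ hx => rfl⟩
  · funext x
    rw [hft, hfg]
    rfl
  · -- ∃ x : ↥Xt, ft x ≠ ⊥
    by_contra hbot
    push_neg at hbot
    have hae := hfae π ⟨⟨hπ1, hπ2⟩, hπcost⟩
    have hπS : π S = m := by
      have h4 : Measure.map Prod.fst π Xt = π (Prod.fst ⁻¹' Xt) :=
        Measure.map_apply measurable_fst hXtm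
      rw [hπ1] at h4
      rw [hSpre, ← h4]
    have hnotS : ∀ᵐ p ∂π, p ∉ S := by
      refine hae.mono fun p hp hpS => ?_
      have hb : f p.1 = ⊥ := hbot ⟨p.1, hpS.1⟩
      rw [hb, EReal.bot_add] at hp
      exact EReal.bot_ne_coe _ hp
    rw [ae_iff] at hnotS
    simp only [not_not, Set.setOf_mem_eq] at hnotS
    rw [hnotS] at hπS
    exact hm0 hπS.symm
  · -- every optimal plan of the restricted problem
    intro π' hπ'
    obtain ⟨hπ'c, hπ'cost⟩ := hπ'
    -- glued plan
    set σ : Measure (X × Y) := m • Measure.map e π' + π.restrict Sᶜ with hσ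
    have hinv : m * m⁻¹ = 1 := ENNReal.mul_inv_cancel hm0 hmtop
    have hfstσ : Measure.map Prod.fst σ = μ := by
      rw [hσ, Measure.map_add _ _ measurable_fst, Measure.map_smul,
        Measure.map_map measurable_fst he.measurable]
      have h1 : (Prod.fst ∘ e : ↥Xt × Y → X) = Subtype.val ∘ Prod.fst := rfl
      rw [h1, ← Measure.map_map measurable_subtype_coe measurable_fst, hπ'c.1, hμt,
        Measure.map_smul, hval.map_comap, Subtype.range_coe]
      rw [smul_smul, hinv, one_smul]
      have h3 : Measure.map Prod.fst (π.restrict Sᶜ) = μ.restrict Xtᶜ := by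
        rw [show Sᶜ = Prod.fst ⁻¹' Xtᶜ by rw [hSpre]; rfl,
          ← Measure.restrict_map measurable_fst hXtm.compl, hπ1]
      rw [h3, Measure.restrict_add_restrict_compl hXtm]
    have hsndσ : Measure.map Prod.snd σ = ν := by
      rw [hσ, Measure.map_add _ _ measurable_snd, Measure.map_smul,
        Measure.map_map measurable_snd he.measurable]
      have h1 : (Prod.snd ∘ e : ↥Xt × Y → Y) = Prod.snd := rfl
      rw [h1, hπ'c.2, hνt, smul_smul, hinv, one_smul, ← Measure.map_add _ _ measurable_snd,
        hρ, Measure.restrict_add_restrict_compl hSm, hπ2]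
    have hσcoup : IsCoupling σ μ ν := ⟨hfstσ, hsndσ⟩
    have hσcost_le : (∫⁻ p, ENNReal.ofReal (c p.1 p.2) ∂σ) ≤ transportCost c μ ν := by
      have hcostσ : (∫⁻ p, ENNReal.ofReal (c p.1 p.2) ∂σ)
          = m * (∫⁻ q, ENNReal.ofReal (ct q.1 q.2) ∂π') + R := by
        rw [hσ, lintegral_add_measure, lintegral_smul_measure,
          lintegral_map hcm he.measurable, smul_eq_mul]
      have hle : (∫⁻ q, ENNReal.ofReal (ct q.1 q.2) ∂π') ≤ m⁻¹ * A := by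
        rw [hπ'cost]
        refine le_trans ?_ hπtcost.le
        exact iInf₂_le πt hπtc
      calc (∫⁻ p, ENNReal.ofReal (c p.1 p.2) ∂σ)
          = m * (∫⁻ q, ENNReal.ofReal (ct q.1 q.2) ∂π') + R := hcostσ
        _ ≤ m * (m⁻¹ * A) + R := by gcongr
        _ = A + R := by rw [← mul_assoc, hinv, one_mul]
        _ = transportCost c μ ν := hsplit
    have hσopt : IsOptimalPlan c μ ν σ := by
      refine ⟨hσcoup, le_antisymm hσcost_le ?_⟩
      exact iInf₂_le σ hσcoup
    have haeσ := hfae σ hσopt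
    have hae1 : ∀ᵐ p ∂(Measure.map e π'),
        f p.1 + fc p.2 = ((c p.1 p.2 : ℝ) : EReal) := by
      have hle : (m • Measure.map e π' : Measure (X × Y)) ≤ σ :=
        Measure.le_add_right le_rfl
      have := haeσ.filter_mono (ae_mono hle)
      rwa [Measure.ae_ennreal_smul_measure_eq hm0] at this
    rw [he.ae_map_iff] at hae1
    refine hae1.mono fun q hq => ?_
    exact key q.1.1 q.1.2 q.2 hq
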